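/- Let P be a partial latin square of order n whose filled cells are exactly those of the upper-left r×s rectangle. Then P is completable to a latin square of order n if and only if P satisfies Hall's Condition. Equivalently, Hall's Condition for such P is equivalent to Ryser's Condition ν(σ) ≥ r+s−n for all symbols σ. -/

import Mathlib

open scoped Classical

section PLS

variable {n : ℕ}

/-- A partial latin square of order `n`: an `n × n` array of optional symbols,
no symbol occurring twice in any row or column. -/
def IsPLS (n : ℕ) (P : Fin n → Fin n → Option (Fin n)) : Prop :=
  (∀ i j j' σ, P i j = some σ → P i j' = some σ → j = j') ∧
  (∀ i i' j σ, P i j = some σ → P i' j = some σ → i = i')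

/-- `σ` is missing from row `i`. -/
def MissingRow (P : Fin n → Fin n → Option (Fin n)) (σ i : Fin n) : Prop :=
  ∀ j, P i j ≠ some σ

/-- `σ` is missing from column `j`. -/
def MissingCol (P : Fin n → Fin n → Option (Fin n)) (σ j : Fin n) : Prop :=
  ∀ i, P i j ≠ some σ

/-- A cell supports `σ` if it contains `σ`, or is empty and `σ` is missing from
its row and column. -/
def Supports (P : Fin n → Fin n → Option (Fin n)) (σ : Fin n) (c : Fin n × Fin n) : Prop :=
  P c.1 c.2 = some σ ∨ (P c.1 c.2 = none ∧ MissingRow P σ c.1 ∧ MissingCol P σ c.2)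

/-- A set of cells is independent if no two share a row or a column. -/
def IndepCells (S : Finset (Fin n × Fin n)) : Prop :=
  ∀ c ∈ S, ∀ c' ∈ S, c ≠ c' → c.1 ≠ c'.1 ∧ c.2 ≠ c'.2

/-- `alpha P σ T` : max size of an independent subset of `T` all of whose cells support `σ`. -/
noncomputable def alpha (P : Fin n → Fin n → Option (Fin n)) (σ : Fin n)
    (T : Finset (Fin n × Fin n)) : ℕ :=
  (T.powerset.filter (fun S => IndepCells S ∧ ∀ c ∈ S, Supports P σ c)).sup Finset.card

/-- Hall's Condition: every set of cells satisfies the Hall Inequality. -/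
def HallCond (n : ℕ) (P : Fin n → Fin n → Option (Fin n)) : Prop :=
  ∀ T : Finset (Fin n × Fin n), T.card ≤ ∑ σ : Fin n, alpha P σ T

/-- A latin square of order `n`. -/
def IsLatin (n : ℕ) (L : Fin n → Fin n → Fin n) : Prop :=
  (∀ i, Function.Injective (L i)) ∧ (∀ j, Function.Injective fun i => L i j)

/-- `L` is a completion of `P`. -/
def Completes (n : ℕ) (P : Fin n → Fin n → Option (Fin n)) (L : Fin n → Fin n → Fin n) : Prop :=
  IsLatin n L ∧ ∀ i j σ, P i j = some σ → L i j = σ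

end PLS

namespace Stmt7Aux
open Finset

variable {n : ℕ}

def Rect (n r s : ℕ) (Q : Fin n → Fin n → Option (Fin n)) : Prop :=
  ∀ i j : Fin n, Q i j ≠ none ↔ (i.val < r ∧ j.val < s)

noncomputable def cnt (Q : Fin n → Fin n → Option (Fin n)) (σ : Fin n) : ℕ :=
  (Finset.univ.filter (fun c : Fin n × Fin n => Q c.1 c.2 = some σ)).card

lemma swap_count {ι α : Type*} [Fintype α] (V : Finset ι) (p : ι → α → Prop) :
    ∑ i ∈ V, (univ.filter (fun σ => p i σ)).card
      = ∑ σ : α, (V.filter (fun i => p i σ)).card := by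
  simp only [Finset.card_filter]
  exact Finset.sum_comm

lemma card_val_lt {r : ℕ} (hrn : r ≤ n) :
    (univ.filter fun i : Fin n => i.val < r).card = r := by
  have h : (univ.filter fun i : Fin n => i.val < r).card = (Finset.range r).card := by
    apply Finset.card_nbij (i := fun i : Fin n => i.val)
    · intro a ha; simp only [mem_coe, mem_filter, mem_univ, true_and] at ha ⊢
      simpa using ha
    · intro a _ b _ h; exact Fin.val_injective h
    · intro m hm
      simp only [Set.mem_image, mem_coe, mem_range, mem_filter, mem_univ, true_and] at hm ⊢
      exact ⟨⟨m, lt_of_lt_of_le hm hrn⟩, hm, rfl⟩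
  rw [h, Finset.card_range]

lemma card_val_not_lt {r : ℕ} (hrn : r ≤ n) :
    (univ.filter fun i : Fin n => ¬ i.val < r).card = n - r := by
  have h := Finset.card_filter_add_card_filter_not (s := (univ : Finset (Fin n)))
    (p := fun i : Fin n => i.val < r)
  rw [card_val_lt hrn, Finset.card_univ, Fintype.card_fin] at h
  omega

lemma card_rowsWith (Q : Fin n → Fin n → Option (Fin n)) (hQ : IsPLS n Q) (σ : Fin n) :
    (univ.filter fun i : Fin n => ∃ j, Q i j = some σ).card = cnt Q σ := by
  rw [cnt]
  symm
  apply Finset.card_nbij (i := fun c : Fin n × Fin n => c.1)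
  · intro c hc; simp only [mem_coe, mem_filter, mem_univ, true_and] at hc ⊢
    exact ⟨c.2, hc⟩
  · intro c hc c' hc' h
    simp only [Set.mem_setOf_eq, mem_coe, mem_filter, mem_univ, true_and] at hc hc'
    dsimp only at h
    have := hQ.1 c.1 c.2 c'.2 σ hc (by rw [h]; exact hc')
    exact Prod.ext h this
  · intro i hi
    simp only [Set.mem_image, mem_coe, mem_filter, mem_univ, true_and] at hi ⊢
    obtain ⟨j, hj⟩ := hi
    exact ⟨(i, j), hj, rfl⟩

lemma card_colsWith (Q : Fin n → Fin n → Option (Fin n)) (hQ : IsPLS n Q) (σ : Fin n) :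
    (univ.filter fun j : Fin n => ∃ i, Q i j = some σ).card = cnt Q σ := by
  rw [cnt]
  symm
  apply Finset.card_nbij (i := fun c : Fin n × Fin n => c.2)
  · intro c hc; simp only [mem_coe, mem_filter, mem_univ, true_and] at hc ⊢
    exact ⟨c.1, hc⟩
  · intro c hc c' hc' h
    simp only [Set.mem_setOf_eq, mem_coe, mem_filter, mem_univ, true_and] at hc hc'
    dsimp only at h
    have := hQ.2 c.1 c'.1 c.2 σ hc (by rw [h]; exact hc')
    exact Prod.ext this h
  · intro j hj
    simp only [Set.mem_image, mem_coe, mem_filter, mem_univ, true_and] at hj ⊢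
    obtain ⟨i, hi⟩ := hj
    exact ⟨(i, j), hi, rfl⟩

lemma card_rowSyms {r s : ℕ} (Q : Fin n → Fin n → Option (Fin n)) (hQ : IsPLS n Q)
    (hR : Rect n r s Q) (hsn : s ≤ n) {i : Fin n} (hi : i.val < r) :
    (univ.filter fun σ : Fin n => ∃ j, Q i j = some σ).card = s := by
  rw [← card_val_lt (n := n) hsn]
  symm
  apply Finset.card_nbij (i := fun j : Fin n => (Q i j).getD i)
  · intro j hj
    simp only [mem_coe, mem_filter, mem_univ, true_and] at hj ⊢
    have : Q i j ≠ none := (hR i j).mpr ⟨hi, hj⟩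
    obtain ⟨σ, hσ⟩ := Option.ne_none_iff_exists'.mp this
    exact ⟨j, by rw [hσ]; rfl⟩
  · intro j hj j' hj' h
    simp only [Set.mem_setOf_eq, mem_coe, mem_filter, mem_univ, true_and] at hj hj'
    obtain ⟨σ, hσ⟩ := Option.ne_none_iff_exists'.mp ((hR i j).mpr ⟨hi, hj⟩)
    obtain ⟨σ', hσ'⟩ := Option.ne_none_iff_exists'.mp ((hR i j').mpr ⟨hi, hj'⟩)
    dsimp only at h
    rw [hσ, hσ'] at h
    simp only [Option.getD_some] at h
    exact hQ.1 i j j' σ hσ (h ▸ hσ')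
  · intro σ hσ
    simp only [Set.mem_image, mem_coe, mem_filter, mem_univ, true_and] at hσ ⊢
    obtain ⟨j, hj⟩ := hσ
    have hjs : j.val < s := ((hR i j).mp (by rw [hj]; simp)).2
    exact ⟨j, hjs, by rw [hj]; rfl⟩

lemma card_colSyms {r s : ℕ} (Q : Fin n → Fin n → Option (Fin n)) (hQ : IsPLS n Q)
    (hR : Rect n r s Q) (hrn : r ≤ n) {j : Fin n} (hj : j.val < s) :
    (univ.filter fun σ : Fin n => ∃ i, Q i j = some σ).card = r := by
  rw [← card_val_lt (n := n) hrn]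
  symm
  apply Finset.card_nbij (i := fun i : Fin n => (Q i j).getD j)
  · intro i hi
    simp only [mem_coe, mem_filter, mem_univ, true_and] at hi ⊢
    have : Q i j ≠ none := (hR i j).mpr ⟨hi, hj⟩
    obtain ⟨σ, hσ⟩ := Option.ne_none_iff_exists'.mp this
    exact ⟨i, by rw [hσ]; rfl⟩
  · intro i hi i' hi' h
    simp only [Set.mem_setOf_eq, mem_coe, mem_filter, mem_univ, true_and] at hi hi'
    obtain ⟨σ, hσ⟩ := Option.ne_none_iff_exists'.mp ((hR i j).mpr ⟨hi, hj⟩)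
    obtain ⟨σ', hσ'⟩ := Option.ne_none_iff_exists'.mp ((hR i' j).mpr ⟨hi', hj⟩)
    dsimp only at h
    rw [hσ, hσ'] at h
    simp only [Option.getD_some] at h
    exact hQ.2 i i' j σ hσ (h ▸ hσ')
  · intro σ hσ
    simp only [Set.mem_image, mem_coe, mem_filter, mem_univ, true_and] at hσ ⊢
    obtain ⟨i, hi⟩ := hσ
    have hir : i.val < r := ((hR i j).mp (by rw [hi]; simp)).1
    exact ⟨i, hir, by rw [hi]; rfl⟩

lemma rows_missing {r s : ℕ} (Q : Fin n → Fin n → Option (Fin n)) (hQ : IsPLS n Q)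
    (hR : Rect n r s Q) (hrn : r ≤ n) (σ : Fin n) :
    (univ.filter fun i : Fin n => i.val < r ∧ ∀ j, Q i j ≠ some σ).card + cnt Q σ = r := by
  have hd : Disjoint (univ.filter fun i : Fin n => i.val < r ∧ ∀ j, Q i j ≠ some σ)
      (univ.filter fun i : Fin n => ∃ j, Q i j = some σ) := by
    rw [Finset.disjoint_left]
    intro i h1 h2
    simp only [mem_filter, mem_univ, true_and] at h1 h2
    obtain ⟨j, hj⟩ := h2
    exact h1.2 j hj
  have key : (univ.filter fun i : Fin n => i.val < r ∧ ∀ j, Q i j ≠ some σ) ∪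
      (univ.filter fun i : Fin n => ∃ j, Q i j = some σ)
      = (univ.filter fun i : Fin n => i.val < r) := by
    ext i
    simp only [mem_union, mem_filter, mem_univ, true_and]
    constructor
    · rintro (⟨h1, _⟩ | ⟨j, hj⟩)
      · exact h1
      · exact ((hR i j).mp (by rw [hj]; simp)).1
    · intro h1
      by_cases h : ∃ j, Q i j = some σ
      · exact Or.inr h
      · push_neg at h; exact Or.inl ⟨h1, h⟩
  rw [← card_rowsWith Q hQ σ, ← Finset.card_union_of_disjoint hd, key,
    card_val_lt (n := n) hrn]

lemma cols_missing {r s : ℕ} (Q : Fin n → Fin n → Option (Fin n)) (hQ : IsPLS n Q)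
    (hR : Rect n r s Q) (hsn : s ≤ n) (σ : Fin n) :
    (univ.filter fun j : Fin n => j.val < s ∧ ∀ i, Q i j ≠ some σ).card + cnt Q σ = s := by
  have hd : Disjoint (univ.filter fun j : Fin n => j.val < s ∧ ∀ i, Q i j ≠ some σ)
      (univ.filter fun j : Fin n => ∃ i, Q i j = some σ) := by
    rw [Finset.disjoint_left]
    intro j h1 h2
    simp only [mem_filter, mem_univ, true_and] at h1 h2
    obtain ⟨i, hi⟩ := h2
    exact h1.2 i hi
  have key : (univ.filter fun j : Fin n => j.val < s ∧ ∀ i, Q i j ≠ some σ) ∪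
      (univ.filter fun j : Fin n => ∃ i, Q i j = some σ)
      = (univ.filter fun j : Fin n => j.val < s) := by
    ext j
    simp only [mem_union, mem_filter, mem_univ, true_and]
    constructor
    · rintro (⟨h1, _⟩ | ⟨i, hi⟩)
      · exact h1
      · exact ((hR i j).mp (by rw [hi]; simp)).2
    · intro h1
      by_cases h : ∃ i, Q i j = some σ
      · exact Or.inr h
      · push_neg at h; exact Or.inl ⟨h1, h⟩
  rw [← card_colsWith Q hQ σ, ← Finset.card_union_of_disjoint hd, key,
    card_val_lt (n := n) hsn]


lemma col_step {r s : ℕ} (hrn : r ≤ n) (hsn : s < n)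
    (Q : Fin n → Fin n → Option (Fin n)) (hQ : IsPLS n Q) (hR : Rect n r s Q)
    (hRy : ∀ σ, r + s ≤ n + cnt Q σ) :
    ∃ Q' : Fin n → Fin n → Option (Fin n), IsPLS n Q' ∧ Rect n r (s+1) Q' ∧
      (∀ i j, Q i j ≠ none → Q' i j = Q i j) ∧
      (∀ σ, r + (s+1) ≤ n + cnt Q' σ) := by
  have hd1 : 1 ≤ n - s := by omega
  set d := n - s with hd
  set F : Finset (Fin n) := univ.filter (fun σ => n + cnt Q σ ≤ r + s) with hF
  set A : Fin n → Finset (Fin n) := fun i => univ.filter (fun σ => ∀ j, Q i j ≠ some σ) with hA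
  have hcardA : ∀ i : Fin n, i.val < r → (A i).card = d := by
    intro i hi
    have h1 := Finset.card_filter_add_card_filter_not
      (s := (univ : Finset (Fin n))) (p := fun σ => ∃ j, Q i j = some σ)
    rw [card_rowSyms Q hQ hR (le_of_lt hsn) hi, Finset.card_univ, Fintype.card_fin] at h1
    have h2 : (univ.filter fun σ : Fin n => ¬ ∃ j, Q i j = some σ) = A i := by
      ext σ; simp [hA, not_exists]
    rw [h2] at h1
    omega
  -- degree bounds on symbols
  have hdegle : ∀ σ : Fin n,
      (univ.filter fun i : Fin n => i.val < r ∧ ∀ j, Q i j ≠ some σ).card ≤ d := by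
    intro σ
    have := rows_missing Q hQ hR hrn σ
    have := hRy σ
    omega
  have hdegge : ∀ σ ∈ F,
      d ≤ (univ.filter fun i : Fin n => i.val < r ∧ ∀ j, Q i j ≠ some σ).card := by
    intro σ hσ
    rw [hF, mem_filter] at hσ
    have := rows_missing Q hQ hR hrn σ
    omega
  set t : Fin n → Finset (Fin n) := fun i => if i.val < r then A i else Fᶜ with ht
  -- Hall condition
  have hall : ∀ S : Finset (Fin n), S.card ≤ (S.biUnion t).card := by
    intro S
    set N := S.biUnion t with hN
    set W := S.filter (fun i => i.val < r) with hW
    have hWsub : ∀ i ∈ W, A i ⊆ N := by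
      intro i hi σ hσ
      rw [hW, mem_filter] at hi
      exact mem_biUnion.mpr ⟨i, hi.1, by rw [ht]; simp only [if_pos hi.2]; exact hσ⟩
    -- |W| ≤ count via double counting
    by_cases hdum : ∀ i ∈ S, i.val < r
    · -- S = W
      have hSW : W = S := Finset.filter_true_of_mem hdum
      have hcount : ∑ i ∈ W, (univ.filter (fun σ : Fin n => ∀ j, Q i j ≠ some σ)).card
          = ∑ σ : Fin n, (W.filter (fun i => ∀ j, Q i j ≠ some σ)).card := by
        simp only [Finset.card_filter]
        exact Finset.sum_comm
      have hlhs : ∑ i ∈ W, (univ.filter (fun σ => ∀ j, Q i j ≠ some σ)).card = W.card * d := by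
        rw [Finset.sum_congr rfl (fun i hi => hcardA i (by rw [hW, mem_filter] at hi; exact hi.2))]
        rw [Finset.sum_const, smul_eq_mul]
      have hrhs : ∑ σ : Fin n, (W.filter (fun i => ∀ j, Q i j ≠ some σ)).card ≤ N.card * d := by
        have hzero : ∀ σ ∈ (univ : Finset (Fin n)), σ ∉ N →
            (W.filter (fun i => ∀ j, Q i j ≠ some σ)).card = 0 := by
          intro σ _ hσN
          rw [Finset.card_eq_zero, Finset.filter_eq_empty_iff]
          intro i hi hmiss
          exact hσN (hWsub i hi (by rw [hA]; simp only [mem_filter, mem_univ, true_and]; exact hmiss))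
        rw [← Finset.sum_subset (Finset.subset_univ N) hzero]
        calc ∑ σ ∈ N, (W.filter (fun i => ∀ j, Q i j ≠ some σ)).card
            ≤ ∑ σ ∈ N, d := by
              apply Finset.sum_le_sum
              intro σ _
              calc (W.filter (fun i => ∀ j, Q i j ≠ some σ)).card
                  ≤ (univ.filter fun i : Fin n => i.val < r ∧ ∀ j, Q i j ≠ some σ).card := by
                    apply Finset.card_le_card
                    intro i hi
                    rw [mem_filter] at hi ⊢
                    rw [hW, mem_filter] at hi
                    exact ⟨mem_univ _, hi.1.2, hi.2⟩
                _ ≤ d := hdegle σ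
          _ = N.card * d := by rw [Finset.sum_const, smul_eq_mul]
      have hWN : W.card * d ≤ N.card * d := by
        calc W.card * d = ∑ i ∈ W, (univ.filter (fun σ : Fin n => ∀ j, Q i j ≠ some σ)).card :=
              hlhs.symm
          _ = ∑ σ : Fin n, (W.filter (fun i => ∀ j, Q i j ≠ some σ)).card := hcount
          _ ≤ N.card * d := hrhs
      have := Nat.le_of_mul_le_mul_right hWN (by omega : 0 < d)
      rw [hSW] at this
      exact this
    · -- there is a dummy
      push_neg at hdum
      obtain ⟨i0, hi0S, hi0⟩ := hdum
      have hFcN : Fᶜ ⊆ N := by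
        intro σ hσ
        exact mem_biUnion.mpr ⟨i0, hi0S,
          by rw [ht]; simp only [if_neg (show ¬ (i0 : Fin n).val < r by omega)]; exact hσ⟩
      -- key double counting over F
      have hFd : F.card * d ≤ ∑ σ ∈ F,
          (univ.filter fun i : Fin n => i.val < r ∧ ∀ j, Q i j ≠ some σ).card := by
        rw [← smul_eq_mul, ← Finset.sum_const]
        exact Finset.sum_le_sum (fun σ hσ => hdegge σ hσ)
      -- split by membership in W
      have hsplit : ∀ σ : Fin n,
          (univ.filter fun i : Fin n => i.val < r ∧ ∀ j, Q i j ≠ some σ).card =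
          (univ.filter fun i : Fin n => i ∈ W ∧ i.val < r ∧ ∀ j, Q i j ≠ some σ).card +
          (univ.filter fun i : Fin n => i ∉ W ∧ i.val < r ∧ ∀ j, Q i j ≠ some σ).card := by
        intro σ
        have h1 := Finset.card_filter_add_card_filter_not
          (s := univ.filter fun i : Fin n => i.val < r ∧ ∀ j, Q i j ≠ some σ)
          (p := fun i => i ∈ W)
        rw [Finset.filter_filter, Finset.filter_filter] at h1
        rw [← h1]
        congr 1
        · congr 1; ext i; simp only [mem_filter, mem_univ, true_and]; tauto
        · congr 1; ext i; simp only [mem_filter, mem_univ, true_and]; tauto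
      -- part 1 bound
      have hpart1 : ∑ σ ∈ F,
          (univ.filter fun i : Fin n => i ∈ W ∧ i.val < r ∧ ∀ j, Q i j ≠ some σ).card
          ≤ (N ∩ F).card * d := by
        have hzero : ∀ σ ∈ F, σ ∉ N ∩ F →
            (univ.filter fun i : Fin n => i ∈ W ∧ i.val < r ∧ ∀ j, Q i j ≠ some σ).card = 0 := by
          intro σ hσF hσ
          rw [Finset.card_eq_zero, Finset.filter_eq_empty_iff]
          rintro i _ ⟨hiW, _, hmiss⟩
          exact hσ (Finset.mem_inter.mpr ⟨hWsub i hiW (by rw [hA]; simp only [mem_filter, mem_univ, true_and]; exact hmiss), hσF⟩)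
        rw [← Finset.sum_subset (Finset.inter_subset_right) hzero]
        calc ∑ σ ∈ N ∩ F, (univ.filter fun i : Fin n => i ∈ W ∧ i.val < r ∧ ∀ j, Q i j ≠ some σ).card
            ≤ ∑ σ ∈ N ∩ F, d := by
              apply Finset.sum_le_sum
              intro σ _
              calc (univ.filter fun i : Fin n => i ∈ W ∧ i.val < r ∧ ∀ j, Q i j ≠ some σ).card
                  ≤ (univ.filter fun i : Fin n => i.val < r ∧ ∀ j, Q i j ≠ some σ).card := by
                    apply Finset.card_le_card
                    intro i hi
                    rw [mem_filter] at hi ⊢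
                    exact ⟨hi.1, hi.2.2⟩
                _ ≤ d := hdegle σ
          _ = (N ∩ F).card * d := by rw [Finset.sum_const, smul_eq_mul]
      -- part 2 bound
      set RmW : Finset (Fin n) := univ.filter (fun i => i ∉ W ∧ i.val < r) with hRmW
      have hpart2 : ∑ σ ∈ F,
          (univ.filter fun i : Fin n => i ∉ W ∧ i.val < r ∧ ∀ j, Q i j ≠ some σ).card
          ≤ RmW.card * d := by
        have hswap : ∑ σ ∈ F, (univ.filter fun i : Fin n =>
              i ∉ W ∧ i.val < r ∧ ∀ j, Q i j ≠ some σ).card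
            = ∑ i : Fin n, (F.filter (fun σ => i ∉ W ∧ i.val < r ∧ ∀ j, Q i j ≠ some σ)).card := by
          simp only [Finset.card_filter]
          exact Finset.sum_comm
        rw [hswap]
        have hzero : ∀ i ∈ (univ : Finset (Fin n)), i ∉ RmW →
            (F.filter (fun σ => i ∉ W ∧ i.val < r ∧ ∀ j, Q i j ≠ some σ)).card = 0 := by
          intro i _ hi
          rw [Finset.card_eq_zero, Finset.filter_eq_empty_iff]
          rintro σ _ ⟨hiW, hir, _⟩
          exact hi (by rw [hRmW]; simp only [mem_filter, mem_univ, true_and]; exact ⟨hiW, hir⟩)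
        rw [← Finset.sum_subset (Finset.subset_univ RmW) hzero]
        calc ∑ i ∈ RmW, (F.filter (fun σ => i ∉ W ∧ i.val < r ∧ ∀ j, Q i j ≠ some σ)).card
            ≤ ∑ i ∈ RmW, d := by
              apply Finset.sum_le_sum
              intro i hi
              rw [hRmW, mem_filter] at hi
              calc (F.filter (fun σ => i ∉ W ∧ i.val < r ∧ ∀ j, Q i j ≠ some σ)).card
                  ≤ (A i).card := by
                    apply Finset.card_le_card
                    intro σ hσ
                    rw [mem_filter] at hσ
                    rw [hA]; simp only [mem_filter, mem_univ, true_and]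
                    exact hσ.2.2.2
                _ = d := hcardA i hi.2.2
          _ = RmW.card * d := by rw [Finset.sum_const, smul_eq_mul]
      -- |RmW| + |W| = r
      have hRmWcard : RmW.card + W.card = r := by
        have h1 := Finset.card_filter_add_card_filter_not
          (s := univ.filter fun i : Fin n => i.val < r) (p := fun i => i ∉ W)
        rw [Finset.filter_filter, Finset.filter_filter, card_val_lt hrn] at h1
        have e1 : (univ.filter fun i : Fin n => i.val < r ∧ i ∉ W) = RmW := by
          rw [hRmW]; ext i; simp only [mem_filter, mem_univ, true_and]; tauto
        have e2 : (univ.filter fun i : Fin n => i.val < r ∧ ¬ i ∉ W) = W := by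
          ext i
          simp only [mem_filter, mem_univ, true_and, not_not]
          constructor
          · rintro ⟨_, h⟩; exact h
          · intro h; rw [hW, mem_filter] at h; exact ⟨h.2, by rw [hW, mem_filter]; exact h⟩
        rw [e1, e2] at h1
        omega
      -- combine
      have hcomb : F.card * d ≤ (N ∩ F).card * d + RmW.card * d := by
        calc F.card * d ≤ _ := hFd
          _ = ∑ σ ∈ F, ((univ.filter fun i : Fin n => i ∈ W ∧ i.val < r ∧ ∀ j, Q i j ≠ some σ).card +
              (univ.filter fun i : Fin n => i ∉ W ∧ i.val < r ∧ ∀ j, Q i j ≠ some σ).card) := by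
            exact Finset.sum_congr rfl (fun σ _ => hsplit σ)
          _ = _ + _ := Finset.sum_add_distrib
          _ ≤ (N ∩ F).card * d + RmW.card * d := Nat.add_le_add hpart1 hpart2
      have hkey : F.card + W.card ≤ (N ∩ F).card + r := by
        have h2 : (F.card + W.card) * d ≤ ((N ∩ F).card + r) * d := by
          have : (F.card + W.card) * d = F.card * d + W.card * d := by ring
          rw [this]
          have h3 : ((N ∩ F).card + r) * d = (N ∩ F).card * d + RmW.card * d + W.card * d := by
            rw [← hRmWcard]; ring
          rw [h3]
          exact Nat.add_le_add hcomb le_rfl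
        exact Nat.le_of_mul_le_mul_right h2 (by omega : 0 < d)
      -- conclude
      have hNge : (N ∩ F).card + (n - F.card) ≤ N.card := by
        have hdisj : Disjoint (N ∩ F) Fᶜ := by
          rw [Finset.disjoint_left]
          intro σ h1 h2
          rw [Finset.mem_compl] at h2
          exact h2 (Finset.mem_inter.mp h1).2
        have hsub2 : (N ∩ F) ∪ Fᶜ ⊆ N := by
          intro σ hσ
          rcases Finset.mem_union.mp hσ with h | h
          · exact (Finset.mem_inter.mp h).1
          · exact hFcN h
        have := Finset.card_le_card hsub2
        rw [Finset.card_union_of_disjoint hdisj, Finset.card_compl, Fintype.card_fin] at this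
        omega
      have hScard : S.card ≤ W.card + (n - r) := by
        have h1 := Finset.card_filter_add_card_filter_not (s := S) (p := fun i : Fin n => i.val < r)
        have h2 : (S.filter fun i : Fin n => ¬ i.val < r).card ≤ n - r := by
          calc (S.filter fun i : Fin n => ¬ i.val < r).card
              ≤ (univ.filter fun i : Fin n => ¬ i.val < r).card :=
                Finset.card_le_card (fun i hi => by
                  rw [mem_filter] at hi ⊢; exact ⟨mem_univ _, hi.2⟩)
            _ = n - r := card_val_not_lt hrn
        rw [hW]
        omega
      have hFn : F.card ≤ n := by
        calc F.card ≤ (univ : Finset (Fin n)).card := Finset.card_le_card (Finset.subset_univ F)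
          _ = n := by rw [Finset.card_univ, Fintype.card_fin]
      omega
  -- apply Hall's theorem
  obtain ⟨f, hfinj, hft⟩ := (Finset.all_card_le_biUnion_card_iff_exists_injective t).mp hall
  have hfsurj : Function.Surjective f := Finite.injective_iff_surjective.mp hfinj
  have hfmiss : ∀ i : Fin n, i.val < r → ∀ j, Q i j ≠ some (f i) := by
    intro i hi
    have := hft i
    rw [ht] at this
    simp only [if_pos hi] at this
    rw [hA] at this
    simpa using this
  set Q' : Fin n → Fin n → Option (Fin n) :=
    fun i j => if j.val = s ∧ i.val < r then some (f i) else Q i j with hQ'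
  refine ⟨Q', ⟨?_, ?_⟩, ?_, ?_, ?_⟩
  · -- row property
    intro i j j' σ h1 h2
    by_cases c1 : j.val = s ∧ i.val < r <;> by_cases c2 : j'.val = s ∧ i.val < r
    · exact Fin.ext (c1.1.trans c2.1.symm)
    · rw [hQ'] at h1 h2
      simp only [if_pos c1, if_neg c2] at h1 h2
      exact absurd h2 (by rw [← Option.some_inj.mp h1]; exact hfmiss i c1.2 j')
    · rw [hQ'] at h1 h2
      simp only [if_neg c1, if_pos c2] at h1 h2
      exact absurd h1 (by rw [← Option.some_inj.mp h2]; exact hfmiss i c2.2 j)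
    · rw [hQ'] at h1 h2
      simp only [if_neg c1, if_neg c2] at h1 h2
      exact hQ.1 i j j' σ h1 h2
  · -- column property
    intro i i' j σ h1 h2
    by_cases c1 : j.val = s ∧ i.val < r <;> by_cases c2 : j.val = s ∧ i'.val < r
    · rw [hQ'] at h1 h2
      simp only [if_pos c1, if_pos c2] at h1 h2
      exact hfinj (Option.some_inj.mp (h1.trans h2.symm))
    · rw [hQ'] at h1 h2
      simp only [if_pos c1, if_neg c2] at h1 h2
      have hne : Q i' j ≠ none := by rw [h2]; simp
      have hlt := ((hR i' j).mp hne).2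
      obtain ⟨cj, -⟩ := c1
      omega
    · rw [hQ'] at h1 h2
      simp only [if_neg c1, if_pos c2] at h1 h2
      have hne : Q i j ≠ none := by rw [h1]; simp
      have hlt := ((hR i j).mp hne).2
      obtain ⟨cj, -⟩ := c2
      omega
    · by_cases cj : j.val = s
      · rw [hQ'] at h1
        simp only [if_neg c1] at h1
        have hne : Q i j ≠ none := by rw [h1]; simp
        have hlt := ((hR i j).mp hne).2
        omega
      · rw [hQ'] at h1 h2
        simp only [if_neg c1, if_neg c2] at h1 h2
        exact hQ.2 i i' j σ h1 h2
  · -- Rect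
    intro i j
    rw [hQ']
    by_cases c : j.val = s ∧ i.val < r
    · simp only [if_pos c]
      constructor
      · intro _; exact ⟨c.2, by omega⟩
      · intro _; simp
    · simp only [if_neg c]
      rw [hR i j]
      push_neg at c
      constructor
      · rintro ⟨h1, h2⟩; exact ⟨h1, by omega⟩
      · rintro ⟨h1, h2⟩
        refine ⟨h1, ?_⟩
        by_cases hjs : j.val = s
        · have := c hjs; omega
        · omega
  · -- extends
    intro i j hij
    have := ((hR i j).mp hij).2
    rw [hQ']
    simp only [if_neg (by omega : ¬ (j.val = s ∧ i.val < r))]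
  · -- Ryser
    intro σ
    have hsub : (univ.filter fun c : Fin n × Fin n => Q c.1 c.2 = some σ) ⊆
        (univ.filter fun c : Fin n × Fin n => Q' c.1 c.2 = some σ) := by
      intro c hc
      rw [mem_filter] at hc ⊢
      refine ⟨mem_univ _, ?_⟩
      have hne : Q c.1 c.2 ≠ none := by rw [hc.2]; simp
      have := ((hR c.1 c.2).mp hne).2
      rw [hQ']
      simp only [if_neg (by omega : ¬ (c.2.val = s ∧ c.1.val < r))]
      exact hc.2
    have hmono : cnt Q σ ≤ cnt Q' σ := Finset.card_le_card hsub
    by_cases hσF : σ ∈ F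
    · obtain ⟨i, hi⟩ := hfsurj σ
      have hir : i.val < r := by
        by_contra hir
        have := hft i
        rw [ht] at this
        simp only [if_neg hir] at this
        rw [Finset.mem_compl] at this
        exact this (hi ▸ hσF)
      set x : Fin n × Fin n := (i, ⟨s, hsn⟩) with hx
      have hxnew : Q' x.1 x.2 = some σ := by
        show (if ((⟨s, hsn⟩ : Fin n)).val = s ∧ i.val < r then some (f i) else Q i ⟨s, hsn⟩)
          = some σ
        rw [if_pos ⟨rfl, hir⟩, hi]
      have hxold : Q x.1 x.2 ≠ some σ := by
        have : Q x.1 x.2 = none := by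
          by_contra h
          have := ((hR x.1 x.2).mp h).2
          simp [hx] at this
        rw [this]; simp
      have hss : (univ.filter fun c : Fin n × Fin n => Q c.1 c.2 = some σ) ⊂
          (univ.filter fun c : Fin n × Fin n => Q' c.1 c.2 = some σ) := by
        rw [Finset.ssubset_iff_of_subset hsub]
        exact ⟨x, by rw [mem_filter]; exact ⟨mem_univ _, hxnew⟩,
          by rw [mem_filter]; push_neg; intro _; exact hxold⟩
      have hlt : cnt Q σ < cnt Q' σ := Finset.card_lt_card hss
      rw [hF, mem_filter] at hσF
      have := hσF.2
      have := hRy σ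
      omega
    · rw [hF, mem_filter] at hσF
      push_neg at hσF
      have := hσF (mem_univ σ)
      omega

lemma row_step {r : ℕ} (hrn : r < n) (Q : Fin n → Fin n → Option (Fin n))
    (hQ : IsPLS n Q) (hR : Rect n r n Q) :
    ∃ Q' : Fin n → Fin n → Option (Fin n), IsPLS n Q' ∧ Rect n (r+1) n Q' ∧
      (∀ i j, Q i j ≠ none → Q' i j = Q i j) := by
  -- every symbol occurs exactly r times
  have hcnt : ∀ σ : Fin n, cnt Q σ = r := by
    intro σ
    have h1 : (univ.filter fun i : Fin n => ∃ j, Q i j = some σ)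
        = (univ.filter fun i : Fin n => i.val < r) := by
      ext i
      simp only [mem_filter, mem_univ, true_and]
      constructor
      · rintro ⟨j, hj⟩
        exact ((hR i j).mp (by rw [hj]; simp)).1
      · intro hi
        have hcard := card_rowSyms Q hQ hR le_rfl hi
        have huniv : (univ.filter fun σ : Fin n => ∃ j, Q i j = some σ) = univ := by
          apply Finset.eq_univ_of_card
          rw [hcard, Fintype.card_fin]
        have : σ ∈ (univ.filter fun σ : Fin n => ∃ j, Q i j = some σ) := by
          rw [huniv]; exact mem_univ σ
        rw [mem_filter] at this
        exact this.2
    rw [← card_rowsWith Q hQ σ, h1, card_val_lt (le_of_lt hrn)]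
  set d := n - r with hd
  have hd1 : 1 ≤ d := by omega
  set B : Fin n → Finset (Fin n) := fun j => univ.filter (fun σ => ∀ i, Q i j ≠ some σ) with hB
  have hcardB : ∀ j : Fin n, (B j).card = d := by
    intro j
    have h1 := Finset.card_filter_add_card_filter_not
      (s := (univ : Finset (Fin n))) (p := fun σ => ∃ i, Q i j = some σ)
    rw [card_colSyms Q hQ hR (le_of_lt hrn) j.isLt, Finset.card_univ, Fintype.card_fin] at h1
    have h2 : (univ.filter fun σ : Fin n => ¬ ∃ i, Q i j = some σ) = B j := by
      ext σ; simp [hB, not_exists]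
    rw [h2] at h1
    omega
  have hdeg : ∀ σ : Fin n, (univ.filter fun j : Fin n => ∀ i, Q i j ≠ some σ).card = d := by
    intro σ
    have h1 := cols_missing Q hQ hR le_rfl σ
    have h2 : (univ.filter fun j : Fin n => j.val < n ∧ ∀ i, Q i j ≠ some σ)
        = (univ.filter fun j : Fin n => ∀ i, Q i j ≠ some σ) := by
      ext j; simp only [mem_filter, mem_univ, true_and]
      exact ⟨fun h => h.2, fun h => ⟨j.isLt, h⟩⟩
    rw [h2, hcnt σ] at h1
    omega
  -- Hall condition
  have hall : ∀ S : Finset (Fin n), S.card ≤ (S.biUnion B).card := by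
    intro S
    set N := S.biUnion B with hN
    have hcount : ∑ j ∈ S, (univ.filter (fun σ : Fin n => ∀ i, Q i j ≠ some σ)).card
        = ∑ σ : Fin n, (S.filter (fun j => ∀ i, Q i j ≠ some σ)).card := by
      simp only [Finset.card_filter]
      exact Finset.sum_comm
    have hlhs : ∑ j ∈ S, (univ.filter (fun σ : Fin n => ∀ i, Q i j ≠ some σ)).card
        = S.card * d := by
      rw [Finset.sum_congr rfl (fun j _ => hcardB j)]
      rw [Finset.sum_const, smul_eq_mul]
    have hrhs : ∑ σ : Fin n, (S.filter (fun j => ∀ i, Q i j ≠ some σ)).card ≤ N.card * d := by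
      have hzero : ∀ σ ∈ (univ : Finset (Fin n)), σ ∉ N →
          (S.filter (fun j => ∀ i, Q i j ≠ some σ)).card = 0 := by
        intro σ _ hσN
        rw [Finset.card_eq_zero, Finset.filter_eq_empty_iff]
        intro j hj hmiss
        exact hσN (mem_biUnion.mpr ⟨j, hj,
          by rw [hB]; simp only [mem_filter, mem_univ, true_and]; exact hmiss⟩)
      rw [← Finset.sum_subset (Finset.subset_univ N) hzero]
      calc ∑ σ ∈ N, (S.filter (fun j => ∀ i, Q i j ≠ some σ)).card
          ≤ ∑ σ ∈ N, d := by
            apply Finset.sum_le_sum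
            intro σ _
            calc (S.filter (fun j => ∀ i, Q i j ≠ some σ)).card
                ≤ (univ.filter fun j : Fin n => ∀ i, Q i j ≠ some σ).card :=
                  Finset.card_le_card (fun j hj => by
                    rw [mem_filter] at hj ⊢; exact ⟨mem_univ _, hj.2⟩)
              _ = d := hdeg σ
        _ = N.card * d := by rw [Finset.sum_const, smul_eq_mul]
    have hSN : S.card * d ≤ N.card * d := by
      calc S.card * d = _ := hlhs.symm
        _ = _ := hcount
        _ ≤ N.card * d := hrhs
    exact Nat.le_of_mul_le_mul_right hSN (by omega : 0 < d)
  obtain ⟨f, hfinj, hft⟩ := (Finset.all_card_le_biUnion_card_iff_exists_injective B).mp hall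
  have hfmiss : ∀ j : Fin n, ∀ i, Q i j ≠ some (f j) := by
    intro j
    have := hft j
    rw [hB] at this
    simpa using this
  set Q' : Fin n → Fin n → Option (Fin n) :=
    fun i j => if i.val = r then some (f j) else Q i j with hQ'
  refine ⟨Q', ⟨?_, ?_⟩, ?_, ?_⟩
  · -- row property
    intro i j j' σ h1 h2
    by_cases c1 : i.val = r
    · rw [hQ'] at h1 h2
      simp only [if_pos c1] at h1 h2
      exact hfinj (Option.some_inj.mp (h1.trans h2.symm))
    · rw [hQ'] at h1 h2
      simp only [if_neg c1] at h1 h2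
      exact hQ.1 i j j' σ h1 h2
  · -- column property
    intro i i' j σ h1 h2
    by_cases c1 : i.val = r <;> by_cases c2 : i'.val = r
    · exact Fin.ext (c1.trans c2.symm)
    · rw [hQ'] at h1 h2
      simp only [if_pos c1, if_neg c2] at h1 h2
      exact absurd h2 (by rw [← Option.some_inj.mp h1]; exact hfmiss j i')
    · rw [hQ'] at h1 h2
      simp only [if_neg c1, if_pos c2] at h1 h2
      exact absurd h1 (by rw [← Option.some_inj.mp h2]; exact hfmiss j i)
    · rw [hQ'] at h1 h2
      simp only [if_neg c1, if_neg c2] at h1 h2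
      exact hQ.2 i i' j σ h1 h2
  · -- Rect
    intro i j
    rw [hQ']
    by_cases c : i.val = r
    · simp only [if_pos c]
      constructor
      · intro _; exact ⟨by omega, j.isLt⟩
      · intro _; simp
    · simp only [if_neg c]
      rw [hR i j]
      constructor
      · rintro ⟨h1, h2⟩; exact ⟨by omega, h2⟩
      · rintro ⟨h1, h2⟩; exact ⟨by omega, h2⟩
  · -- extends
    intro i j hij
    have := ((hR i j).mp hij).1
    rw [hQ']
    simp only [if_neg (by omega : ¬ i.val = r)]

lemma col_extend : ∀ k s : ℕ, s + k = n → ∀ r : ℕ, r ≤ n →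
    ∀ Q : Fin n → Fin n → Option (Fin n), IsPLS n Q → Rect n r s Q →
    (∀ σ, r + s ≤ n + cnt Q σ) →
    ∃ Q', IsPLS n Q' ∧ Rect n r n Q' ∧ (∀ i j, Q i j ≠ none → Q' i j = Q i j) := by
  intro k
  induction k with
  | zero =>
    intro s hs r hr Q hQ hR _
    obtain rfl : s = n := by omega
    exact ⟨Q, hQ, hR, fun _ _ _ => rfl⟩
  | succ k ih =>
    intro s hs r hr Q hQ hR hRy
    have hsn : s < n := by omega
    obtain ⟨Q1, h1, h2, h3, h4⟩ := col_step hr hsn Q hQ hR hRy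
    obtain ⟨Q', h5, h6, h7⟩ := ih (s+1) (by omega) r hr Q1 h1 h2 h4
    refine ⟨Q', h5, h6, fun i j hij => ?_⟩
    have e1 : Q1 i j = Q i j := h3 i j hij
    rw [h7 i j (by rw [e1]; exact hij), e1]

lemma row_extend : ∀ k r : ℕ, r + k = n →
    ∀ Q : Fin n → Fin n → Option (Fin n), IsPLS n Q → Rect n r n Q →
    ∃ Q', IsPLS n Q' ∧ Rect n n n Q' ∧ (∀ i j, Q i j ≠ none → Q' i j = Q i j) := by
  intro k
  induction k with
  | zero =>
    intro r hr Q hQ hR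
    obtain rfl : r = n := by omega
    exact ⟨Q, hQ, hR, fun _ _ _ => rfl⟩
  | succ k ih =>
    intro r hr Q hQ hR
    have hrn : r < n := by omega
    obtain ⟨Q1, h1, h2, h3⟩ := row_step hrn Q hQ hR
    obtain ⟨Q', h5, h6, h7⟩ := ih (r+1) (by omega) Q1 h1 h2
    refine ⟨Q', h5, h6, fun i j hij => ?_⟩
    have e1 : Q1 i j = Q i j := h3 i j hij
    rw [h7 i j (by rw [e1]; exact hij), e1]

lemma ryser_completes {r s : ℕ} (hrn : r ≤ n) (hsn : s ≤ n)
    (P : Fin n → Fin n → Option (Fin n)) (hP : IsPLS n P) (hR : Rect n r s P)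
    (hRy : ∀ σ, r + s ≤ n + cnt P σ) :
    ∃ L, Completes n P L := by
  obtain ⟨M, hM1, hM2, hM3⟩ := col_extend (n - s) s (by omega) r hrn P hP hR hRy
  obtain ⟨Q, hQ1, hQ2, hQ3⟩ := row_extend (n - r) r (by omega) M hM1 hM2
  have hfull : ∀ i j : Fin n, (Q i j).isSome := by
    intro i j
    have : Q i j ≠ none := (hQ2 i j).mpr ⟨i.isLt, j.isLt⟩
    exact Option.ne_none_iff_isSome.mp this
  refine ⟨fun i j => (Q i j).get (hfull i j), ⟨⟨?_, ?_⟩, ?_⟩⟩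
  · intro i j j' h
    dsimp only at h
    have e1 : Q i j = some ((Q i j).get (hfull i j)) := (Option.some_get _).symm
    have e2 : Q i j' = some ((Q i j').get (hfull i j')) := (Option.some_get _).symm
    rw [h] at e1
    exact hQ1.1 i j j' _ e1 e2
  · intro j i i' h
    dsimp only at h
    have e1 : Q i j = some ((Q i j).get (hfull i j)) := (Option.some_get _).symm
    have e2 : Q i' j = some ((Q i' j).get (hfull i' j)) := (Option.some_get _).symm
    rw [h] at e1
    exact hQ1.2 i i' j _ e1 e2
  · intro i j σ hPij
    have hPne : P i j ≠ none := by rw [hPij]; simp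
    have e1 : M i j = P i j := hM3 i j hPne
    have e2 : Q i j = M i j := hQ3 i j (by rw [e1]; exact hPne)
    have e3 : Q i j = some σ := by rw [e2, e1, hPij]
    simp only [e3, Option.get_some]

lemma completes_hall (P : Fin n → Fin n → Option (Fin n)) (L : Fin n → Fin n → Fin n)
    (hL : Completes n P L) : HallCond n P := by
  intro T
  have hfib := Finset.card_eq_sum_card_fiberwise
    (s := T) (t := (univ : Finset (Fin n))) (f := fun c : Fin n × Fin n => L c.1 c.2)
    (fun c _ => mem_univ _)
  rw [hfib]
  apply Finset.sum_le_sum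
  intro σ _
  apply Finset.le_sup (f := Finset.card)
  rw [Finset.mem_filter]
  refine ⟨Finset.mem_powerset.mpr (Finset.filter_subset _ _), ?_, ?_⟩
  · -- independent
    intro c hc c' hc' hne
    rw [mem_filter] at hc hc'
    constructor
    · intro h1
      apply hne
      have h2 : L c.1 c.2 = L c.1 c'.2 := by
        rw [hc.2]
        rw [h1]
        exact hc'.2.symm
      exact Prod.ext h1 (hL.1.1 c.1 h2)
    · intro h2
      apply hne
      have h1 : L c.1 c.2 = L c'.1 c.2 := by
        rw [hc.2]
        rw [h2]
        exact hc'.2.symm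
      exact Prod.ext (hL.1.2 c.2 h1) h2
  · -- supports
    intro c hc
    rw [mem_filter] at hc
    rcases h : P c.1 c.2 with _ | τ
    · refine Or.inr ⟨h, ?_, ?_⟩
      · intro j hj
        have h1 : L c.1 j = σ := hL.2 c.1 j σ hj
        have h2 : L c.1 j = L c.1 c.2 := by rw [h1, hc.2]
        have := hL.1.1 c.1 h2
        rw [← this] at h
        rw [hj] at h
        exact Option.some_ne_none _ h
      · intro i hi
        have h1 : L i c.2 = σ := hL.2 i c.2 σ hi
        have h2 : L i c.2 = L c.1 c.2 := by rw [h1, hc.2]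
        have := hL.1.2 c.2 h2
        rw [← this] at h
        rw [hi] at h
        exact Option.some_ne_none _ h
    · left
      have := hL.2 c.1 c.2 τ h
      rw [h, ← this, hc.2]

lemma hall_ryser {r s : ℕ} (hr : 1 ≤ r) (hrn : r ≤ n) (hs : 1 ≤ s) (hsn : s ≤ n)
    (P : Fin n → Fin n → Option (Fin n)) (hP : IsPLS n P) (hR : Rect n r s P)
    (hH : HallCond n P) : ∀ σ, r + s ≤ n + cnt P σ := by
  intro σ
  by_contra hσ
  push_neg at hσ
  set T : Finset (Fin n × Fin n) :=
    univ.filter (fun c : Fin n × Fin n => c.1.val < r ∨ c.2.val < s) with hT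
  -- (a) |T| + r*s = r*n + n*s
  have hTcard : T.card + r * s = r * n + n * s := by
    set A : Finset (Fin n × Fin n) :=
      (univ.filter fun i : Fin n => i.val < r) ×ˢ (univ : Finset (Fin n)) with hA
    set B : Finset (Fin n × Fin n) :=
      (univ : Finset (Fin n)) ×ˢ (univ.filter fun j : Fin n => j.val < s) with hB
    have hTAB : T = A ∪ B := by
      ext c
      simp only [hT, hA, hB, mem_filter, mem_union, mem_product, mem_univ, true_and, and_true]
    have hint : A ∩ B = (univ.filter fun i : Fin n => i.val < r) ×ˢ
        (univ.filter fun j : Fin n => j.val < s) := by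
      ext c
      simp only [hA, hB, mem_inter, mem_product, mem_filter, mem_univ, true_and, and_true]
    have h1 := Finset.card_union_add_card_inter A B
    rw [← hTAB, hint] at h1
    rw [Finset.card_product, Finset.card_product, Finset.card_product] at h1
    rw [card_val_lt hrn, card_val_lt hsn, Finset.card_univ, Fintype.card_fin] at h1
    exact h1
  -- (b) total count of filled cells
  have hsumcnt : ∑ τ : Fin n, cnt P τ = r * s := by
    set D : Finset (Fin n × Fin n) := univ.filter (fun c : Fin n × Fin n => P c.1 c.2 ≠ none)
      with hD
    have hDcard : D.card = r * s := by
      have hDeq : D = (univ.filter fun i : Fin n => i.val < r) ×ˢ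
          (univ.filter fun j : Fin n => j.val < s) := by
        ext c
        simp only [hD, mem_filter, mem_product, mem_univ, true_and]
        exact hR c.1 c.2
      rw [hDeq, Finset.card_product, card_val_lt hrn, card_val_lt hsn]
    have hfib := Finset.card_eq_sum_card_fiberwise
      (s := D) (t := (univ : Finset (Fin n)))
      (f := fun c : Fin n × Fin n => (P c.1 c.2).getD c.1) (fun c _ => mem_univ _)
    rw [hDcard] at hfib
    rw [hfib]
    apply Finset.sum_congr rfl
    intro τ _
    show (Finset.univ.filter (fun c : Fin n × Fin n => P c.1 c.2 = some τ)).card = _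
    congr 1
    ext c
    simp only [hD, mem_filter, mem_univ, true_and, Finset.filter_filter]
    constructor
    · intro hc
      rw [hc]
      simp
    · rintro ⟨hne, hg⟩
      obtain ⟨x, hx⟩ := Option.ne_none_iff_exists'.mp hne
      rw [hx] at hg ⊢
      simp only [Option.getD_some] at hg
      rw [hg]
  -- (c) the two alpha bounds
  have bound1 : ∀ τ : Fin n, alpha P τ T + cnt P τ ≤ r + s := by
    intro τ
    have hcntr : cnt P τ ≤ r := by have := rows_missing P hP hR hrn τ; omega
    have halpha : alpha P τ T ≤ r + s - cnt P τ := by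
      apply Finset.sup_le
      intro S hS
      rw [Finset.mem_filter, Finset.mem_powerset] at hS
      obtain ⟨hST, hInd, hSupp⟩ := hS
      -- split S
      have hsplit1 := Finset.card_filter_add_card_filter_not
        (s := S) (p := fun c : Fin n × Fin n => P c.1 c.2 ≠ none)
      have hsplit2 := Finset.card_filter_add_card_filter_not
        (s := S.filter (fun c : Fin n × Fin n => ¬ P c.1 c.2 ≠ none))
        (p := fun c : Fin n × Fin n => c.2.val < s)
      have h0 : (S.filter (fun c : Fin n × Fin n => P c.1 c.2 ≠ none)).card ≤ cnt P τ := by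
        apply Finset.card_le_card
        intro c hc
        rw [mem_filter] at hc ⊢
        refine ⟨mem_univ _, ?_⟩
        rcases hSupp c hc.1 with h | h
        · exact h
        · exact absurd h.1 hc.2
      have h2 : ((S.filter (fun c : Fin n × Fin n => ¬ P c.1 c.2 ≠ none)).filter
          (fun c : Fin n × Fin n => c.2.val < s)).card + cnt P τ ≤ s := by
        have hle : ((S.filter (fun c : Fin n × Fin n => ¬ P c.1 c.2 ≠ none)).filter
            (fun c : Fin n × Fin n => c.2.val < s)).card ≤
            (univ.filter fun j : Fin n => j.val < s ∧ ∀ i, P i j ≠ some τ).card := by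
          apply Finset.card_le_card_of_injOn (f := fun c => c.2)
          · intro c hc
            rw [mem_coe, mem_filter, mem_filter] at hc
            rw [mem_coe, mem_filter]
            refine ⟨mem_univ _, hc.2, ?_⟩
            have hcS : c ∈ S := hc.1.1
            rcases hSupp c hcS with h | h
            · exact absurd (not_not.mp hc.1.2) (by rw [h]; simp)
            · exact h.2.2
          · intro c hc c' hc' hcc
            simp only [mem_coe, mem_filter] at hc hc'
            by_contra hne
            exact (hInd c hc.1.1 c' hc'.1.1 hne).2 hcc
        have := cols_missing P hP hR hsn τ
        omega
      have h1 : ((S.filter (fun c : Fin n × Fin n => ¬ P c.1 c.2 ≠ none)).filter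
          (fun c : Fin n × Fin n => ¬ c.2.val < s)).card + cnt P τ ≤ r := by
        have hle : ((S.filter (fun c : Fin n × Fin n => ¬ P c.1 c.2 ≠ none)).filter
            (fun c : Fin n × Fin n => ¬ c.2.val < s)).card ≤
            (univ.filter fun i : Fin n => i.val < r ∧ ∀ j, P i j ≠ some τ).card := by
          apply Finset.card_le_card_of_injOn (f := fun c => c.1)
          · intro c hc
            rw [mem_coe, mem_filter, mem_filter] at hc
            rw [mem_coe, mem_filter]
            have hcS : c ∈ S := hc.1.1
            have hcT : c ∈ T := hST hcS
            rw [hT, mem_filter] at hcT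
            have hc1r : c.1.val < r := by
              rcases hcT.2 with h | h
              · exact h
              · exact absurd h hc.2
            refine ⟨mem_univ _, hc1r, ?_⟩
            rcases hSupp c hcS with h | h
            · exact absurd (not_not.mp hc.1.2) (by rw [h]; simp)
            · exact h.2.1
          · intro c hc c' hc' hcc
            simp only [mem_coe, mem_filter] at hc hc'
            by_contra hne
            exact (hInd c hc.1.1 c' hc'.1.1 hne).1 hcc
        have := rows_missing P hP hR hrn τ
        omega
      omega
    omega
  have bound2 : alpha P σ T + (r + s) ≤ cnt P σ + 2 * n := by
    have halpha : alpha P σ T ≤ cnt P σ + 2 * n - (r + s) := by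
      apply Finset.sup_le
      intro S hS
      rw [Finset.mem_filter, Finset.mem_powerset] at hS
      obtain ⟨hST, hInd, hSupp⟩ := hS
      have hsplit1 := Finset.card_filter_add_card_filter_not
        (s := S) (p := fun c : Fin n × Fin n => P c.1 c.2 ≠ none)
      have hsplit2 := Finset.card_filter_add_card_filter_not
        (s := S.filter (fun c : Fin n × Fin n => ¬ P c.1 c.2 ≠ none))
        (p := fun c : Fin n × Fin n => c.2.val < s)
      have h0 : (S.filter (fun c : Fin n × Fin n => P c.1 c.2 ≠ none)).card ≤ cnt P σ := by
        apply Finset.card_le_card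
        intro c hc
        rw [mem_filter] at hc ⊢
        refine ⟨mem_univ _, ?_⟩
        rcases hSupp c hc.1 with h | h
        · exact h
        · exact absurd h.1 hc.2
      have h2 : ((S.filter (fun c : Fin n × Fin n => ¬ P c.1 c.2 ≠ none)).filter
          (fun c : Fin n × Fin n => c.2.val < s)).card ≤ n - r := by
        rw [← card_val_not_lt hrn]
        apply Finset.card_le_card_of_injOn (f := fun c => c.1)
        · intro c hc
          rw [mem_coe, mem_filter, mem_filter] at hc
          rw [mem_coe, mem_filter]
          refine ⟨mem_univ _, ?_⟩
          intro hc1r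
          have hne : P c.1 c.2 ≠ none := (hR c.1 c.2).mpr ⟨hc1r, hc.2⟩
          exact hne (not_not.mp hc.1.2)
        · intro c hc c' hc' hcc
          simp only [mem_coe, mem_filter] at hc hc'
          by_contra hne
          exact (hInd c hc.1.1 c' hc'.1.1 hne).1 hcc
      have h1 : ((S.filter (fun c : Fin n × Fin n => ¬ P c.1 c.2 ≠ none)).filter
          (fun c : Fin n × Fin n => ¬ c.2.val < s)).card ≤ n - s := by
        rw [← card_val_not_lt hsn]
        apply Finset.card_le_card_of_injOn (f := fun c => c.2)
        · intro c hc
          rw [mem_coe, mem_filter, mem_filter] at hc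
          rw [mem_coe, mem_filter]
          exact ⟨mem_univ _, hc.2⟩
        · intro c hc c' hc' hcc
          simp only [mem_coe, mem_filter] at hc hc'
          by_contra hne
          exact (hInd c hc.1.1 c' hc'.1.1 hne).2 hcc
      omega
    have hcntr : cnt P σ ≤ r := by have := rows_missing P hP hR hrn σ; omega
    omega
  -- combine
  have hHall := hH T
  have hsum1 : ∑ τ : Fin n, (alpha P τ T + cnt P τ)
      = ∑ τ : Fin n, alpha P τ T + ∑ τ : Fin n, cnt P τ := Finset.sum_add_distrib
  have herase : ∑ τ ∈ (univ : Finset (Fin n)).erase σ, (alpha P τ T + cnt P τ)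
      ≤ (n - 1) * (r + s) := by
    calc ∑ τ ∈ (univ : Finset (Fin n)).erase σ, (alpha P τ T + cnt P τ)
        ≤ ∑ _τ ∈ (univ : Finset (Fin n)).erase σ, (r + s) :=
          Finset.sum_le_sum (fun τ _ => bound1 τ)
      _ = (n - 1) * (r + s) := by
          rw [Finset.sum_const, smul_eq_mul, Finset.card_erase_of_mem (mem_univ σ),
            Finset.card_univ, Fintype.card_fin]
  have htot : ∑ τ ∈ (univ : Finset (Fin n)).erase σ, (alpha P τ T + cnt P τ)
      + (alpha P σ T + cnt P σ) = ∑ τ : Fin n, (alpha P τ T + cnt P τ) :=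
    Finset.sum_erase_add _ _ (mem_univ σ)
  have hmul : (n - 1) * (r + s) + (r + s) = n * (r + s) := by
    have h1 : (n - 1) + 1 = n := by omega
    calc (n - 1) * (r + s) + (r + s) = ((n - 1) + 1) * (r + s) := by ring
      _ = n * (r + s) := by rw [h1]
  have hrn2 : r * n + n * s = n * (r + s) := by ring
  omega


end Stmt7Aux

theorem stmt7 (n r s : ℕ) (hr : 1 ≤ r) (hrn : r ≤ n) (hs : 1 ≤ s) (hsn : s ≤ n)
    (P : Fin n → Fin n → Option (Fin n)) (hP : IsPLS n P)
    (hshape : ∀ i j : Fin n, P i j ≠ none ↔ (i.val < r ∧ j.val < s))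
    (ν : Fin n → ℕ)
    (hν : ∀ σ, ν σ = (Finset.univ.filter
      (fun c : Fin n × Fin n => P c.1 c.2 = some σ)).card) :
    ((∃ L, Completes n P L) ↔ HallCond n P) ∧
      (HallCond n P ↔ ∀ σ : Fin n, r + s - n ≤ ν σ) := by
  classical
  have hR : Stmt7Aux.Rect n r s P := hshape
  have hcnt : ∀ σ, ν σ = Stmt7Aux.cnt P σ := hν
  have h1 : (∃ L, Completes n P L) → HallCond n P := by
    rintro ⟨L, hL⟩
    exact Stmt7Aux.completes_hall P L hL
  have h2 : HallCond n P → ∀ σ, r + s ≤ n + Stmt7Aux.cnt P σ :=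
    Stmt7Aux.hall_ryser hr hrn hs hsn P hP hR
  have h3 : (∀ σ, r + s ≤ n + Stmt7Aux.cnt P σ) → ∃ L, Completes n P L :=
    Stmt7Aux.ryser_completes hrn hsn P hP hR
  constructor
  · exact ⟨h1, fun hH => h3 (h2 hH)⟩
  · constructor
    · intro hH σ
      have := h2 hH σ
      rw [hcnt σ]
      omega
    · intro hRy
      apply h1
      apply h3
      intro σ
      have := hRy σ
      rw [hcnt σ] at this
      omega
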